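/- Let 0 < ε ≤ 1, let k ≥ 1 be an integer, let X be a finite family of points in ℝ^d, and let S ⊆ ℝ^d be a finite nonempty set with Φ(S, X) ≤ (ε²/32) · Δ_k(X). Let g : X → S be a nearest-point assignment, i.e., for every x ∈ X, ‖x − g(x)‖ = min_{s ∈ S} ‖x − s‖, and define the weight function w : S → ℝ by w(s) = |{x ∈ X : g(x) = s}|. Then for every finite set C ⊆ ℝ^d with |C| = k, we have |Φ(C, S, w) − Φ(C, X)| ≤ ε · Φ(C, X); in particular (1 − ε) · Φ(C, X) ≤ Φ(C, S, w) ≤ (1 + ε) · Φ(C, X). -/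
import Mathlib


/-- k-means cost of a family `X : Fin n → ℝ^d` with respect to a finite
(nonempty) center set `C ⊆ ℝ^d`: `Φ(C, X) = Σ_i min_{c ∈ C} ‖X i − c‖²`. -/
noncomputable def kmeansCost {d n : ℕ} (C : Finset (EuclideanSpace ℝ (Fin d)))
    (X : Fin n → EuclideanSpace ℝ (Fin d)) : ℝ :=
  ∑ i, sInf ((fun c => dist (X i) c ^ 2) '' (C : Set (EuclideanSpace ℝ (Fin d))))

/-- Optimal k-means cost `Δ_k(X)`: infimum of `Φ(C, X)` over sets `C ⊆ ℝ^d`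
with `|C| = k`. -/
noncomputable def kmeansOpt {d n : ℕ} (k : ℕ) (X : Fin n → EuclideanSpace ℝ (Fin d)) : ℝ :=
  sInf {r : ℝ | ∃ C : Finset (EuclideanSpace ℝ (Fin d)), C.card = k ∧ kmeansCost C X = r}

/-- Weighted k-means cost `Φ(C, S, w) = Σ_{s ∈ S} w(s) · min_{c ∈ C} ‖s − c‖²`. -/
noncomputable def wKmeansCost {d : ℕ} (C S : Finset (EuclideanSpace ℝ (Fin d)))
    (w : EuclideanSpace ℝ (Fin d) → ℝ) : ℝ :=
  ∑ s ∈ S, w s * sInf ((fun c => dist s c ^ 2) '' (C : Set (EuclideanSpace ℝ (Fin d))))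

lemma sInf_dist_image_eq {d : ℕ} (C : Finset (EuclideanSpace ℝ (Fin d))) (hC : C.Nonempty)
    (p : EuclideanSpace ℝ (Fin d)) :
    sInf ((fun c => dist p c) '' (C : Set (EuclideanSpace ℝ (Fin d))))
      = Metric.infDist p (C : Set (EuclideanSpace ℝ (Fin d))) := by
  obtain ⟨c, hcC, hc⟩ := (C.finite_toSet.isCompact).exists_infDist_eq_dist
    (Finset.coe_nonempty.mpr hC) p
  refine le_antisymm ?_ ?_
  · rw [hc]; exact csInf_le (C.finite_toSet.image _).bddBelow ⟨c, hcC, rfl⟩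
  · refine le_csInf ((Finset.coe_nonempty.mpr hC).image _) ?_
    rintro _ ⟨c', hc', rfl⟩
    exact Metric.infDist_le_dist_of_mem hc'

lemma sInf_sq_dist_image_eq {d : ℕ} (C : Finset (EuclideanSpace ℝ (Fin d))) (hC : C.Nonempty)
    (p : EuclideanSpace ℝ (Fin d)) :
    sInf ((fun c => dist p c ^ 2) '' (C : Set (EuclideanSpace ℝ (Fin d))))
      = Metric.infDist p (C : Set (EuclideanSpace ℝ (Fin d))) ^ 2 := by
  obtain ⟨c, hcC, hc⟩ := (C.finite_toSet.isCompact).exists_infDist_eq_dist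
    (Finset.coe_nonempty.mpr hC) p
  refine le_antisymm ?_ ?_
  · rw [hc]; exact csInf_le (C.finite_toSet.image _).bddBelow ⟨c, hcC, rfl⟩
  · refine le_csInf ((Finset.coe_nonempty.mpr hC).image _) ?_
    rintro _ ⟨c', hc', rfl⟩
    exact pow_le_pow_left₀ Metric.infDist_nonneg (Metric.infDist_le_dist_of_mem hc') 2

lemma kmeansCost_nonneg {d n : ℕ} (C : Finset (EuclideanSpace ℝ (Fin d)))
    (X : Fin n → EuclideanSpace ℝ (Fin d)) : 0 ≤ kmeansCost C X := by
  refine Finset.sum_nonneg fun i _ => Real.sInf_nonneg ?_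
  rintro _ ⟨c, _, rfl⟩
  positivity

/-- geometric coresets are coresets. Let `0 < ε ≤ 1`, `k ≥ 1`,
let `X` be a family of points in `ℝ^d` and `S ⊆ ℝ^d` a finite nonempty set with
`Φ(S, X) ≤ (ε²/32) · Δ_k(X)`. Let `g` be a nearest-point assignment of points of
`X` to `S`, and let `w(s)` be the number of points of `X` assigned to `s`.
Then for every `C ⊆ ℝ^d` with `|C| = k`,
`|Φ(C, S, w) − Φ(C, X)| ≤ ε · Φ(C, X)`; in particular
`(1 − ε) · Φ(C, X) ≤ Φ(C, S, w) ≤ (1 + ε) · Φ(C, X)`. -/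
theorem geometric_coreset_is_coreset {d n k : ℕ} (hk : 1 ≤ k) (ε : ℝ)
    (hε0 : 0 < ε) (hε1 : ε ≤ 1)
    (X : Fin n → EuclideanSpace ℝ (Fin d))
    (S : Finset (EuclideanSpace ℝ (Fin d))) (hS : S.Nonempty)
    (hcost : kmeansCost S X ≤ ε ^ 2 / 32 * kmeansOpt k X)
    (g : Fin n → EuclideanSpace ℝ (Fin d))
    (hgS : ∀ i, g i ∈ S)
    (hgNear : ∀ i, dist (X i) (g i) =
      sInf ((fun s => dist (X i) s) '' (S : Set (EuclideanSpace ℝ (Fin d)))))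
    (w : EuclideanSpace ℝ (Fin d) → ℝ)
    (hw : ∀ s, w s = (Nat.card {i : Fin n // g i = s} : ℝ)) :
    ∀ C : Finset (EuclideanSpace ℝ (Fin d)), C.card = k →
      |wKmeansCost C S w - kmeansCost C X| ≤ ε * kmeansCost C X ∧
      (1 - ε) * kmeansCost C X ≤ wKmeansCost C S w ∧
      wKmeansCost C S w ≤ (1 + ε) * kmeansCost C X := by
  classical
  intro C hCcard
  have hCne : C.Nonempty := Finset.card_pos.mp (by omega)
  set a : Fin n → ℝ := fun i => Metric.infDist (g i) (C : Set (EuclideanSpace ℝ (Fin d)))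
    with ha_def
  set b : Fin n → ℝ := fun i => Metric.infDist (X i) (C : Set (EuclideanSpace ℝ (Fin d)))
    with hb_def
  set dd : Fin n → ℝ := fun i => dist (X i) (g i) with hdd_def
  have ha0 : ∀ i, 0 ≤ a i := fun i => Metric.infDist_nonneg
  have hb0 : ∀ i, 0 ≤ b i := fun i => Metric.infDist_nonneg
  have hd0 : ∀ i, 0 ≤ dd i := fun i => dist_nonneg
  set Q : ℝ := kmeansCost C X with hQ_def
  set P : ℝ := kmeansCost S X with hP_def
  have hQ : Q = ∑ i, b i ^ 2 := by
    refine Finset.sum_congr rfl fun i _ => ?_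
    exact sInf_sq_dist_image_eq C hCne _
  have hP : P = ∑ i, dd i ^ 2 := by
    refine Finset.sum_congr rfl fun i _ => ?_
    show _ = dist (X i) (g i) ^ 2
    rw [sInf_sq_dist_image_eq S hS, hgNear i, sInf_dist_image_eq S hS]
  have hW : wKmeansCost C S w = ∑ i, a i ^ 2 := by
    rw [wKmeansCost,
      ← Finset.sum_fiberwise_of_maps_to (fun i (_ : i ∈ Finset.univ) => hgS i)
        (fun i => a i ^ 2)]
    refine Finset.sum_congr rfl fun s hs => ?_
    rw [sInf_sq_dist_image_eq C hCne s, hw s]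
    have hcong : ∀ i ∈ Finset.univ.filter (fun i => g i = s),
        a i ^ 2 = Metric.infDist s (C : Set (EuclideanSpace ℝ (Fin d))) ^ 2 := by
      intro i hi
      have : g i = s := (Finset.mem_filter.mp hi).2
      rw [ha_def]; simp [this]
    rw [Finset.sum_congr rfl hcong, Finset.sum_const, nsmul_eq_mul]
    congr 2
    rw [Nat.card_eq_fintype_card, Fintype.card_subtype]
  have hQ0 : 0 ≤ Q := kmeansCost_nonneg C X
  have hP0 : 0 ≤ P := kmeansCost_nonneg S X
  -- pointwise bound
  have hpt : ∀ i, |a i ^ 2 - b i ^ 2| ≤ dd i ^ 2 + 2 * (dd i * b i) := by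
    intro i
    have h1 : a i ≤ b i + dd i := by
      have := Metric.infDist_le_infDist_add_dist
        (x := g i) (y := X i) (s := (C : Set (EuclideanSpace ℝ (Fin d))))
      rwa [dist_comm] at this
    have h2 : b i ≤ a i + dd i := Metric.infDist_le_infDist_add_dist
    rw [abs_le]
    constructor <;> nlinarith [ha0 i, hb0 i, hd0 i]
  have hsum : |wKmeansCost C S w - Q| ≤ P + 2 * ∑ i, dd i * b i := by
    rw [hW, hQ, ← Finset.sum_sub_distrib]
    calc |∑ i, (a i ^ 2 - b i ^ 2)| ≤ ∑ i, |a i ^ 2 - b i ^ 2| :=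
          Finset.abs_sum_le_sum_abs _ _
      _ ≤ ∑ i, (dd i ^ 2 + 2 * (dd i * b i)) := Finset.sum_le_sum fun i _ => hpt i
      _ = P + 2 * ∑ i, dd i * b i := by
          rw [Finset.sum_add_distrib, ← Finset.mul_sum, hP]
  -- Cauchy–Schwarz
  have hcs : (∑ i, dd i * b i) ^ 2 ≤ P * Q := by
    rw [hP, hQ]; exact Finset.sum_mul_sq_le_sq_mul_sq _ _ _
  have hddb0 : 0 ≤ ∑ i, dd i * b i :=
    Finset.sum_nonneg fun i _ => mul_nonneg (hd0 i) (hb0 i)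
  have hddb : ∑ i, dd i * b i ≤ Real.sqrt (P * Q) := by
    rw [← Real.sqrt_sq hddb0]
    exact Real.sqrt_le_sqrt hcs
  -- P ≤ ε²/32 * Q
  have hopt_le : kmeansOpt k X ≤ Q := by
    refine csInf_le ⟨0, ?_⟩ ⟨C, hCcard, rfl⟩
    rintro r ⟨C', _, rfl⟩
    exact kmeansCost_nonneg C' X
  have hPQ : P ≤ ε ^ 2 / 32 * Q := by
    refine hcost.trans ?_
    exact mul_le_mul_of_nonneg_left hopt_le (by positivity)
  -- √(PQ) ≤ (3ε/16) Q
  have hsqrt : Real.sqrt (P * Q) ≤ 3 * ε / 16 * Q := by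
    have h1 : P * Q ≤ (3 * ε / 16 * Q) ^ 2 := by nlinarith [sq_nonneg (ε * Q)]
    calc Real.sqrt (P * Q) ≤ Real.sqrt ((3 * ε / 16 * Q) ^ 2) := Real.sqrt_le_sqrt h1
      _ = 3 * ε / 16 * Q := Real.sqrt_sq (by positivity)
  have hmain : |wKmeansCost C S w - Q| ≤ ε * Q := by
    have : |wKmeansCost C S w - Q| ≤ ε ^ 2 / 32 * Q + 2 * (3 * ε / 16 * Q) := by
      calc |wKmeansCost C S w - Q| ≤ P + 2 * ∑ i, dd i * b i := hsum
        _ ≤ ε ^ 2 / 32 * Q + 2 * (3 * ε / 16 * Q) := by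
            have := hddb.trans hsqrt
            linarith
    nlinarith [this]
  have h2 := abs_le.mp hmain
  exact ⟨hmain, by linarith [h2.1], by linarith [h2.2]⟩
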